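/- Let O ⊆ ℝ be open and l : O → ℂ a bilipschitz injective map. The measure σ on ℂ defined as the pushforward under l of |l'| dλ restricted to O (equivalently, the 1-dimensional Hausdorff measure on l(O)) has modulus of continuity satisfying σ(closedBall(z,t) ∩ l(O)) ≤ 2√2 · Lip(l) · Lip(l^{-1}) · t for all z ∈ ℂ and t ≥ 0. -/

import Mathlib

open Metric Set MeasureTheory ENNReal NNReal

/-- If `l : O → ℂ` (with `O ⊆ ℝ` open) is injective, Lipschitz with constant `K`,
and its inverse is Lipschitz with constant `K'`, then the length measure `σ` on
`l(O)` (the 1-dimensional Hausdorff measure restricted to `l(O)`) has modulus of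
continuity satisfying `σ(closedBall z t ∩ l(O)) ≤ 2√2·K·K'·t` for all `z ∈ ℂ`
and `t ≥ 0`. -/
theorem length_measure_modulus_of_continuity
    (O : Set ℝ) (hO : IsOpen O) (l : ℝ → ℂ) (hinj : Set.InjOn l O)
    (K : ℝ) (hK : 0 ≤ K)
    (hLip : ∀ x₁ ∈ O, ∀ x₂ ∈ O, ‖l x₂ - l x₁‖ ≤ K * |x₂ - x₁|)
    (K' : ℝ) (hK' : 0 ≤ K')
    (hbil : ∀ x₁ ∈ O, ∀ x₂ ∈ O, |x₂ - x₁| ≤ K' * ‖l x₂ - l x₁‖) :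
    ∀ (z : ℂ) (t : ℝ), 0 ≤ t →
      (μH[1] : Measure ℂ) (closedBall z t ∩ (l '' O)) ≤
        ENNReal.ofReal (2 * Real.sqrt 2 * K * K' * t) := by
  intro z t ht
  set A : Set ℝ := O ∩ l ⁻¹' (closedBall z t) with hA
  have himg : closedBall z t ∩ (l '' O) = l '' A := by
    ext y
    constructor
    · rintro ⟨hy, x, hx, rfl⟩
      exact ⟨x, ⟨hx, hy⟩, rfl⟩
    · rintro ⟨x, ⟨hx, hx'⟩, rfl⟩
      exact ⟨hx', x, hx, rfl⟩
  rw [himg]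
  rcases A.eq_empty_or_nonempty with h | ⟨x₀, hx₀⟩
  · simp [h]
  -- l is Lipschitz on A
  have hlipA : LipschitzOnWith K.toNNReal l A := by
    intro x hx y hy
    rw [edist_nndist, edist_nndist, ← ENNReal.coe_mul, ENNReal.coe_le_coe,
      ← NNReal.coe_le_coe]
    push_cast
    calc dist (l x) (l y) = ‖l x - l y‖ := by simp [Complex.dist_eq]
      _ ≤ K * |x - y| := hLip y hy.1 x hx.1
      _ = K.toNNReal * dist x y := by
          rw [Real.coe_toNNReal K hK, Real.dist_eq]
  have hmono := hlipA.hausdorffMeasure_image_le (d := 1) zero_le_one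
  -- any two points of A are within 2 K' t
  have hAdist : ∀ x ∈ A, ∀ y ∈ A, |y - x| ≤ 2 * K' * t := by
    intro x hx y hy
    calc |y - x| ≤ K' * ‖l y - l x‖ := hbil x hx.1 y hy.1
      _ ≤ K' * (‖l y - z‖ + ‖z - l x‖) := by
          gcongr
          simpa using norm_sub_le_norm_sub_add_norm_sub (l y) z (l x)
      _ ≤ K' * (t + t) := by
          gcongr
          · simpa [Complex.dist_eq] using hy.2
          · simpa [Complex.dist_eq, dist_comm] using hx.2
      _ = 2 * K' * t := by ring
  have hbddA : BddAbove A ∧ BddBelow A := by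
    constructor
    · exact ⟨x₀ + 2 * K' * t, fun x hx => by
        have := hAdist x₀ hx₀ x hx; rw [abs_le] at this; linarith [this.2]⟩
    · exact ⟨x₀ - 2 * K' * t, fun x hx => by
        have := hAdist x₀ hx₀ x hx; rw [abs_le] at this; linarith [this.1]⟩
  -- A is contained in [sInf A, sSup A], of length ≤ 2 K' t
  have hsub : A ⊆ Icc (sInf A) (sSup A) := fun x hx =>
    ⟨csInf_le hbddA.2 hx, le_csSup hbddA.1 hx⟩
  have hlen : sSup A - sInf A ≤ 2 * K' * t := by
    have h1 : sSup A ≤ sInf A + 2 * K' * t := by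
      apply csSup_le ⟨x₀, hx₀⟩
      intro x hx
      have h2 : x - 2 * K' * t ≤ sInf A := by
        apply le_csInf ⟨x₀, hx₀⟩
        intro y hy
        have := hAdist y hy x hx
        rw [abs_le] at this; linarith [this.2]
      linarith
    linarith
  have hvolA : (μH[1] : Measure ℝ) A ≤ ENNReal.ofReal (2 * K' * t) := by
    rw [MeasureTheory.hausdorffMeasure_real]
    calc volume A ≤ volume (Icc (sInf A) (sSup A)) := measure_mono hsub
      _ = ENNReal.ofReal (sSup A - sInf A) := Real.volume_Icc
      _ ≤ ENNReal.ofReal (2 * K' * t) := ENNReal.ofReal_le_ofReal hlen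
  calc (μH[1] : Measure ℂ) (l '' A) ≤ (K.toNNReal : ℝ≥0∞) ^ (1 : ℝ) * μH[1] A :=
        hmono
    _ ≤ (K.toNNReal : ℝ≥0∞) ^ (1 : ℝ) * ENNReal.ofReal (2 * K' * t) := by
        gcongr
    _ = ENNReal.ofReal (K * (2 * K' * t)) := by
        rw [ENNReal.rpow_one, ← ENNReal.ofReal_coe_nnreal,
          ← ENNReal.ofReal_mul (by positivity), Real.coe_toNNReal K hK]
    _ ≤ ENNReal.ofReal (2 * Real.sqrt 2 * K * K' * t) := by
        apply ENNReal.ofReal_le_ofReal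
        have h2 : (1 : ℝ) ≤ Real.sqrt 2 := by
          rw [show (1:ℝ) = Real.sqrt 1 by simp]
          exact Real.sqrt_le_sqrt (by norm_num)
        nlinarith [mul_nonneg (mul_nonneg hK hK') ht]
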